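/- arXiv:2101.03372 — 4 statements merged into one kernel-verified Lean document; each statement's English description precedes it below -/
import Mathlib

section
/- Let a < b be reals, n ≥ 1 a natural number, h = (b−a)/(2n), k > 0, θ = k·h, and nodes x_r = a + r·h for r = 0,…,2n. Let ψ : ℝ → ℝ be a polynomial of degree at most 2. Then ∫_a^b sin(k·x)·ψ(x) dx = Filon_sin(ψ), i.e. Filon's sine quadrature formula is exact for quadratic polynomials. -/
open Real Finset

lemma hasDerivAt_F (k c0 c1 c2 : ℝ) (hk : k ≠ 0) (x : ℝ) :
    HasDerivAt (fun x => (-(c2*x^2+c1*x+c0)/k)*Real.cos (k*x)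
      + ((2*c2*x+c1)/k^2)*Real.sin (k*x) + (2*c2/k^3)*Real.cos (k*x))
    (Real.sin (k*x)*(c2*x^2+c1*x+c0)) x := by
  have hx : HasDerivAt (fun x : ℝ => k*x) k x := by
    simpa using (hasDerivAt_id x).const_mul k
  have hcos : HasDerivAt (fun x => Real.cos (k*x)) (-Real.sin (k*x)*k) x :=
    (Real.hasDerivAt_cos (k*x)).comp x hx
  have hsin : HasDerivAt (fun x => Real.sin (k*x)) (Real.cos (k*x)*k) x :=
    (Real.hasDerivAt_sin (k*x)).comp x hx
  have hp1 : HasDerivAt (fun x : ℝ => -(c2*x^2+c1*x+c0)/k) (-(c2*(2*x)+c1)/k) x := by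
    have : HasDerivAt (fun x : ℝ => c2*x^2+c1*x+c0) (c2*(2*x)+c1) x := by
      simpa using (((hasDerivAt_pow 2 x).const_mul c2).add
        ((hasDerivAt_id x).const_mul c1)).add_const c0
    simpa using this.neg.div_const k
  have hp2 : HasDerivAt (fun x : ℝ => (2*c2*x+c1)/k^2) (2*c2/k^2) x := by
    simpa using (((hasDerivAt_id x).const_mul (2*c2)).add_const c1).div_const (k^2)
  have := ((hp1.mul hcos).add (hp2.mul hsin)).add (hcos.const_mul (2*c2/k^3))
  refine this.congr_deriv ?_
  field_simp
  ring

lemma panel (c h k c0 c1 c2 : ℝ) (hk : k ≠ 0) (hh : h ≠ 0) :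
    (∫ x in c..(c+2*h), Real.sin (k*x) * (c2*x^2+c1*x+c0))
    = h * ((1/(k*h) + Real.sin (k*h) * Real.cos (k*h) / (k*h)^2 - 2*Real.sin (k*h)^2/(k*h)^3)
            * ((c2*c^2+c1*c+c0) * Real.cos (k*c) - (c2*(c+2*h)^2+c1*(c+2*h)+c0) * Real.cos (k*(c+2*h)))
         + (2*((1+Real.cos (k*h)^2)/(k*h)^2 - 2*Real.sin (k*h)*Real.cos (k*h)/(k*h)^3))
            * (((c2*c^2+c1*c+c0) * Real.sin (k*c) + (c2*(c+2*h)^2+c1*(c+2*h)+c0) * Real.sin (k*(c+2*h)))/2)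
         + (4*(Real.sin (k*h)/(k*h)^3 - Real.cos (k*h)/(k*h)^2))
            * ((c2*(c+h)^2+c1*(c+h)+c0) * Real.sin (k*(c+h)))) := by
  rw [intervalIntegral.integral_eq_sub_of_hasDerivAt
    (fun x _ => hasDerivAt_F k c0 c1 c2 hk x)
    (Continuous.intervalIntegrable (by fun_prop) _ _)]
  have e1 : k*(c+2*h) = (k*c + k*h) + k*h := by ring
  have e2 : k*(c+h) = k*c + k*h := by ring
  rw [e1, e2, Real.sin_add ((k*c+k*h)) (k*h), Real.cos_add ((k*c+k*h)) (k*h),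
      Real.sin_add (k*c) (k*h), Real.cos_add (k*c) (k*h)]
  set s := Real.sin (k*h) with hs
  set t := Real.cos (k*h) with ht
  set S := Real.sin (k*c) with hS
  set C := Real.cos (k*c) with hC
  have hst : s^2 + t^2 = 1 := Real.sin_sq_add_cos_sq (k*h)
  field_simp
  linear_combination (2*c*h^2*k*c2*S + h^2*k*c1*S + 2*h^2*c2*C - c^2*h*k*c2*t^2*S - c^2*h*k*c2*s*t*C - 4*c*h^2*k*c2*t^2*S - 4*c*h^2*k*c2*s*t*C - c*h*k*c1*t^2*S - c*h*k*c1*s*t*C - 4*h^3*k*c2*t^2*S - 4*h^3*k*c2*s*t*C - 2*h^2*k*c1*t^2*S - 2*h^2*k*c1*s*t*C - h*k*c0*t^2*S - h*k*c0*s*t*C + 2*c^2*c2*s*t*S + 2*c^2*c2*s^2*C + 8*c*h*c2*s*t*S + 8*c*h*c2*s^2*C + 2*c*c1*s*t*S + 2*c*c1*s^2*C + 8*h^2*c2*s*t*S + 8*h^2*c2*s^2*C + 4*h*c1*s*t*S + 4*h*c1*s^2*C + 2*c0*s*t*S + 2*c0*s^2*C + c^2*h*k*c2*S + c*h*k*c1*S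 + h*k*c0*S) * hst

lemma filon_sum (h α β γ : ℝ) (fc fs : ℕ → ℝ) (n : ℕ) :
    ∑ r ∈ Finset.range n,
      (h * (α * (fc (2*r) - fc (2*r+2)) + β * ((fs (2*r) + fs (2*r+2))/2) + γ * fs (2*r+1)))
    = h * (α * (fc 0 - fc (2*n))
        + β * ((∑ r ∈ Finset.range (n+1), fs (2*r)) - (fs 0 + fs (2*n))/2)
        + γ * ∑ r ∈ Finset.range n, fs (2*r+1)) := by
  induction n with
  | zero => simp
  | succ m ih =>
    have e : 2*(m+1) = 2*m+2 := by ring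
    rw [Finset.sum_range_succ, ih, e,
        Finset.sum_range_succ (fun r => fs (2*r)) (m+1),
        Finset.sum_range_succ (fun r => fs (2*r+1)) m, e]
    ring



/-- Filon's sine quadrature formula on `[a,b]` with `2n` equal subintervals. -/
noncomputable def filonSin (a b k : ℝ) (n : ℕ) (ψ : ℝ → ℝ) : ℝ :=
  let h : ℝ := (b - a) / (2 * n)
  let θ : ℝ := k * h
  let x : ℕ → ℝ := fun r => a + r * h
  let α : ℝ := 1 / θ + Real.sin θ * Real.cos θ / θ ^ 2 - 2 * Real.sin θ ^ 2 / θ ^ 3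
  let β : ℝ := 2 * ((1 + Real.cos θ ^ 2) / θ ^ 2 - 2 * Real.sin θ * Real.cos θ / θ ^ 3)
  let γ : ℝ := 4 * (Real.sin θ / θ ^ 3 - Real.cos θ / θ ^ 2)
  let Seven : ℝ := (∑ r ∈ Finset.range (n + 1), ψ (x (2 * r)) * Real.sin (k * x (2 * r)))
      - (ψ a * Real.sin (k * a) + ψ b * Real.sin (k * b)) / 2
  let Sodd : ℝ := ∑ r ∈ Finset.range n, ψ (x (2 * r + 1)) * Real.sin (k * x (2 * r + 1))
  h * (α * (ψ a * Real.cos (k * a) - ψ b * Real.cos (k * b)) + β * Seven + γ * Sodd)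

/-- Filon's cosine quadrature formula on `[a,b]` with `2n` equal subintervals. -/
noncomputable def filonCos (a b k : ℝ) (n : ℕ) (ψ : ℝ → ℝ) : ℝ :=
  let h : ℝ := (b - a) / (2 * n)
  let θ : ℝ := k * h
  let x : ℕ → ℝ := fun r => a + r * h
  let α : ℝ := 1 / θ + Real.sin θ * Real.cos θ / θ ^ 2 - 2 * Real.sin θ ^ 2 / θ ^ 3
  let β : ℝ := 2 * ((1 + Real.cos θ ^ 2) / θ ^ 2 - 2 * Real.sin θ * Real.cos θ / θ ^ 3)
  let γ : ℝ := 4 * (Real.sin θ / θ ^ 3 - Real.cos θ / θ ^ 2)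
  let Ceven : ℝ := (∑ r ∈ Finset.range (n + 1), ψ (x (2 * r)) * Real.cos (k * x (2 * r)))
      - (ψ a * Real.cos (k * a) + ψ b * Real.cos (k * b)) / 2
  let Codd : ℝ := ∑ r ∈ Finset.range n, ψ (x (2 * r + 1)) * Real.cos (k * x (2 * r + 1))
  h * (α * (ψ b * Real.sin (k * b) - ψ a * Real.sin (k * a)) + β * Ceven + γ * Codd)

theorem filonSin_exact_on_quadratics
    (a b k : ℝ) (hab : a < b) (hk : 0 < k) (n : ℕ) (hn : 1 ≤ n)
    (ψ : ℝ → ℝ) (hψ : ∃ c0 c1 c2 : ℝ, ∀ x : ℝ, ψ x = c2 * x ^ 2 + c1 * x + c0) :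
    (∫ x in a..b, Real.sin (k * x) * ψ x) = filonSin a b k n ψ := by
  obtain ⟨c0, c1, c2, hψ⟩ := hψ
  have hψf : ψ = fun x => c2 * x ^ 2 + c1 * x + c0 := funext hψ
  subst hψf
  have hn0 : (0:ℝ) < n := by exact_mod_cast hn
  set h : ℝ := (b - a) / (2 * n) with hh
  have hhpos : 0 < h := div_pos (by linarith) (by positivity)
  have hk' : k ≠ 0 := ne_of_gt hk
  have hh' : h ≠ 0 := ne_of_gt hhpos
  have hb : b = a + 2 * n * h := by rw [hh]; field_simp; ring
  have hsplit := intervalIntegral.sum_integral_adjacent_intervals (μ := MeasureTheory.volume)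
    (a := fun r : ℕ => a + 2*(r:ℝ)*h)
    (f := fun x => Real.sin (k*x) * (c2*x^2+c1*x+c0)) (n := n)
    (fun i _ => Continuous.intervalIntegrable (by fun_prop) _ _)
  have step : ∀ r : ℕ,
      (∫ x in (a + 2*(r:ℝ)*h)..(a + 2*((r:ℕ)+1:ℕ)*h), Real.sin (k*x) * (c2*x^2+c1*x+c0))
      = h * ((1/(k*h) + Real.sin (k*h) * Real.cos (k*h) / (k*h)^2 - 2*Real.sin (k*h)^2/(k*h)^3)
            * ((fun j : ℕ => (c2*(a+(j:ℝ)*h)^2+c1*(a+(j:ℝ)*h)+c0) * Real.cos (k*(a+(j:ℝ)*h))) (2*r)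
              - (fun j : ℕ => (c2*(a+(j:ℝ)*h)^2+c1*(a+(j:ℝ)*h)+c0) * Real.cos (k*(a+(j:ℝ)*h))) (2*r+2))
         + (2*((1+Real.cos (k*h)^2)/(k*h)^2 - 2*Real.sin (k*h)*Real.cos (k*h)/(k*h)^3))
            * (((fun j : ℕ => (c2*(a+(j:ℝ)*h)^2+c1*(a+(j:ℝ)*h)+c0) * Real.sin (k*(a+(j:ℝ)*h))) (2*r)
              + (fun j : ℕ => (c2*(a+(j:ℝ)*h)^2+c1*(a+(j:ℝ)*h)+c0) * Real.sin (k*(a+(j:ℝ)*h))) (2*r+2))/2)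
         + (4*(Real.sin (k*h)/(k*h)^3 - Real.cos (k*h)/(k*h)^2))
            * ((fun j : ℕ => (c2*(a+(j:ℝ)*h)^2+c1*(a+(j:ℝ)*h)+c0) * Real.sin (k*(a+(j:ℝ)*h))) (2*r+1))) := by
    intro r
    have eup : a + 2*(((r:ℕ)+1:ℕ):ℝ)*h = (a + 2*(r:ℝ)*h) + 2*h := by push_cast; ring
    rw [eup, panel (a + 2*(r:ℝ)*h) h k c0 c1 c2 hk' hh']
    have a0 : k*(a + 2*(r:ℝ)*h) = k*(a+((2*r:ℕ):ℝ)*h) := by push_cast; ring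
    have a1 : k*((a + 2*(r:ℝ)*h)+2*h) = k*(a+((2*r+2:ℕ):ℝ)*h) := by push_cast; ring
    have a2 : k*((a + 2*(r:ℝ)*h)+h) = k*(a+((2*r+1:ℕ):ℝ)*h) := by push_cast; ring
    rw [a1, a2, a0]
    push_cast
    ring
  beta_reduce at hsplit
  have hbe : a + 2*((n:ℕ):ℝ)*h = b := by rw [hb]
  rw [hbe] at hsplit
  have h0e : a + 2*((0:ℕ):ℝ)*h = a := by norm_num
  rw [h0e] at hsplit
  rw [show (∫ x in a..b, Real.sin (k * x) * (fun x => c2 * x ^ 2 + c1 * x + c0) x)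
      = ∫ x in a..b, Real.sin (k * x) * (c2 * x ^ 2 + c1 * x + c0) from rfl, ← hsplit,
     Finset.sum_congr rfl (fun r _ => step r),
     filon_sum h (1/(k*h) + Real.sin (k*h) * Real.cos (k*h) / (k*h)^2 - 2*Real.sin (k*h)^2/(k*h)^3)
       (2*((1+Real.cos (k*h)^2)/(k*h)^2 - 2*Real.sin (k*h)*Real.cos (k*h)/(k*h)^3))
       (4*(Real.sin (k*h)/(k*h)^3 - Real.cos (k*h)/(k*h)^2))
       (fun j : ℕ => (c2*(a+(j:ℝ)*h)^2+c1*(a+(j:ℝ)*h)+c0) * Real.cos (k*(a+(j:ℝ)*h)))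
       (fun j : ℕ => (c2*(a+(j:ℝ)*h)^2+c1*(a+(j:ℝ)*h)+c0) * Real.sin (k*(a+(j:ℝ)*h))) n]
  simp only [filonSin]
  rw [← hh]
  have h2n : a + ((2*n:ℕ):ℝ)*h = b := by push_cast; rw [hb]
  rw [h2n]
  simp only [Nat.cast_zero, zero_mul, add_zero]
  try ring
end

section
/- Let a < b be reals, n ≥ 1 a natural number, h = (b−a)/(2n), k > 0, θ = k·h, and nodes x_r = a + r·h for r = 0,…,2n. Let ψ : ℝ → ℝ be a polynomial of degree at most 2. Then ∫_a^b cos(k·x)·ψ(x) dx = Filon_cos(ψ), i.e. Filon's cosine quadrature formula is exact for quadratic polynomials. -/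
open Real Finset

lemma filon_panel (k h c c0 c1 c2 : ℝ) (hk : k ≠ 0) (hh : h ≠ 0) :
    (∫ x in c..(c+2*h), Real.cos (k*x) * (c2*x^2+c1*x+c0)) =
    h * ((1/(k*h) + Real.sin (k*h)*Real.cos (k*h)/(k*h)^2 - 2*Real.sin (k*h)^2/(k*h)^3)
          * ((c2*(c+2*h)^2+c1*(c+2*h)+c0) * Real.sin (k*(c+2*h))
              - (c2*c^2+c1*c+c0) * Real.sin (k*c))
       + (2*((1+Real.cos (k*h)^2)/(k*h)^2 - 2*Real.sin (k*h)*Real.cos (k*h)/(k*h)^3))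
          * (((c2*c^2+c1*c+c0)*Real.cos (k*c)
              + (c2*(c+2*h)^2+c1*(c+2*h)+c0)*Real.cos (k*(c+2*h)))/2)
       + (4*(Real.sin (k*h)/(k*h)^3 - Real.cos (k*h)/(k*h)^2))
          * ((c2*(c+h)^2+c1*(c+h)+c0)*Real.cos (k*(c+h)))) := by
  have hθ : k*h ≠ 0 := mul_ne_zero hk hh
  set F : ℝ → ℝ := fun x =>
    ((c2*(k^2*x^2-2)+c1*k^2*x+c0*k^2)*Real.sin (k*x)+(2*c2*k*x+c1*k)*Real.cos (k*x))/k^3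
    with hFdef
  have hF : ∀ x : ℝ, HasDerivAt F (Real.cos (k*x) * (c2*x^2+c1*x+c0)) x := by
    intro x
    have hkx : HasDerivAt (fun x : ℝ => k*x) k x := by
      simpa using (hasDerivAt_id x).const_mul k
    have hsin : HasDerivAt (fun x : ℝ => Real.sin (k*x)) (Real.cos (k*x) * k) x := hkx.sin
    have hcos : HasDerivAt (fun x : ℝ => Real.cos (k*x)) (-Real.sin (k*x) * k) x := hkx.cos
    have h2 : HasDerivAt (fun x : ℝ => x^2) (2*x) x := by simpa using hasDerivAt_pow 2 x
    have hp1 := ((((h2.const_mul (k^2)).sub_const 2).const_mul c2).add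
        ((hasDerivAt_id x).const_mul (c1*k^2))).add_const (c0*k^2)
    have hp2 := ((hasDerivAt_id x).const_mul (2*c2*k)).add_const (c1*k)
    have hall := ((hp1.mul hsin).add (hp2.mul hcos)).div_const (k^3)
    refine hall.congr_deriv ?_
    rw [div_eq_iff (pow_ne_zero 3 hk)]
    simp only [Pi.add_apply, id]
    ring
  have hcont : IntervalIntegrable (fun x => Real.cos (k*x) * (c2*x^2+c1*x+c0))
      MeasureTheory.volume c (c+2*h) := by
    apply Continuous.intervalIntegrable
    fun_prop
  rw [intervalIntegral.integral_eq_sub_of_hasDerivAt (fun x _ => hF x) hcont]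
  rw [hFdef]
  simp only []
  rw [div_sub_div_same]
  have hR : h * ((1/(k*h) + Real.sin (k*h)*Real.cos (k*h)/(k*h)^2 - 2*Real.sin (k*h)^2/(k*h)^3)
          * ((c2*(c+2*h)^2+c1*(c+2*h)+c0) * Real.sin (k*(c+2*h))
              - (c2*c^2+c1*c+c0) * Real.sin (k*c))
       + (2*((1+Real.cos (k*h)^2)/(k*h)^2 - 2*Real.sin (k*h)*Real.cos (k*h)/(k*h)^3))
          * (((c2*c^2+c1*c+c0)*Real.cos (k*c)
              + (c2*(c+2*h)^2+c1*(c+2*h)+c0)*Real.cos (k*(c+2*h)))/2)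
       + (4*(Real.sin (k*h)/(k*h)^3 - Real.cos (k*h)/(k*h)^2))
          * ((c2*(c+h)^2+c1*(c+h)+c0)*Real.cos (k*(c+h))))
      = (h * (((k*h)^2 + (k*h)*Real.sin (k*h)*Real.cos (k*h) - 2*Real.sin (k*h)^2)
             * ((c2*(c+2*h)^2+c1*(c+2*h)+c0) * Real.sin (k*(c+2*h))
                 - (c2*c^2+c1*c+c0) * Real.sin (k*c))
          + ((k*h)*(1+Real.cos (k*h)^2) - 2*Real.sin (k*h)*Real.cos (k*h))
             * ((c2*c^2+c1*c+c0)*Real.cos (k*c)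
                 + (c2*(c+2*h)^2+c1*(c+2*h)+c0)*Real.cos (k*(c+2*h)))
          + (4*Real.sin (k*h) - 4*(k*h)*Real.cos (k*h))
             * ((c2*(c+h)^2+c1*(c+h)+c0)*Real.cos (k*(c+h))))) / (k*h)^3 := by
    field_simp
  rw [hR, div_eq_div_iff (pow_ne_zero 3 hk) (pow_ne_zero 3 hθ)]
  have e2 : k*(c+2*h) = k*(c+h) + k*h := by ring
  have e0 : k*c = k*(c+h) - k*h := by ring
  rw [e2, e0, Real.sin_add, Real.cos_add, Real.sin_sub, Real.cos_sub]
  have hP : Real.sin (k*h)^2 + Real.cos (k*h)^2 = 1 := Real.sin_sq_add_cos_sq (k*h)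
  linear_combination ((4*Real.sin (k*h) - 2*Real.cos (k*h)*(k*h)) * h * k^3
      * Real.cos (k*(c+h)) * (c2*h^2 + (c2*(c+h)^2+c1*(c+h)+c0))) * hP

theorem filonCos_exact_on_quadratics
    (a b k : ℝ) (hab : a < b) (hk : 0 < k) (n : ℕ) (hn : 1 ≤ n)
    (ψ : ℝ → ℝ) (hψ : ∃ c0 c1 c2 : ℝ, ∀ x : ℝ, ψ x = c2 * x ^ 2 + c1 * x + c0) :
    (∫ x in a..b, Real.cos (k * x) * ψ x) = filonCos a b k n ψ := by
  obtain ⟨c0, c1, c2, hψe⟩ := hψ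
  have hψf : ψ = fun x => c2 * x ^ 2 + c1 * x + c0 := funext hψe
  subst hψf
  have hk' : k ≠ 0 := ne_of_gt hk
  set H : ℝ := (b - a) / (2 * n) with hH
  have hn0 : (0:ℝ) < n := by exact_mod_cast hn
  have hHpos : 0 < H := by
    have : 0 < b - a := by linarith
    rw [hH]; positivity
  have hH' : H ≠ 0 := ne_of_gt hHpos
  have hb : a + (2*n : ℕ) * H = b := by
    push_cast
    rw [hH]
    field_simp
    ring
  set g : ℕ → ℝ := fun j =>
      (c2*(a+(j:ℝ)*H)^2+c1*(a+(j:ℝ)*H)+c0) * Real.cos (k*(a+(j:ℝ)*H)) with hg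
  set G : ℕ → ℝ := fun j =>
      (c2*(a+(j:ℝ)*H)^2+c1*(a+(j:ℝ)*H)+c0) * Real.sin (k*(a+(j:ℝ)*H)) with hGdef
  set nd : ℕ → ℝ := fun r => a + 2*(r:ℝ)*H with hnd
  have hcont : Continuous fun x : ℝ => Real.cos (k*x) * (c2*x^2+c1*x+c0) := by fun_prop
  have hsplit := intervalIntegral.sum_integral_adjacent_intervals
      (a := nd) (μ := MeasureTheory.volume)
      (f := fun x : ℝ => Real.cos (k*x) * (c2*x^2+c1*x+c0)) (n := n)
      (fun i _ => hcont.intervalIntegrable _ _)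
  have h0 : nd 0 = a := by simp [hnd]
  have hbn : nd n = b := by
    rw [hnd]
    push_cast at hb ⊢
    linarith
  rw [h0, hbn] at hsplit
  have hintg : (∫ x in a..b, Real.cos (k * x) * (fun x => c2 * x ^ 2 + c1 * x + c0) x)
      = ∑ i ∈ Finset.range n, ∫ x in nd i..nd (i+1),
          Real.cos (k*x) * (c2*x^2+c1*x+c0) := by
    rw [hsplit]
  rw [hintg]
  set α : ℝ := 1/(k*H) + Real.sin (k*H)*Real.cos (k*H)/(k*H)^2 - 2*Real.sin (k*H)^2/(k*H)^3 with hα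
  set β : ℝ := 2*((1+Real.cos (k*H)^2)/(k*H)^2 - 2*Real.sin (k*H)*Real.cos (k*H)/(k*H)^3) with hβ
  set γ : ℝ := 4*(Real.sin (k*H)/(k*H)^3 - Real.cos (k*H)/(k*H)^2) with hγ
  have hpanel : ∀ i : ℕ, (∫ x in nd i..nd (i+1), Real.cos (k*x) * (c2*x^2+c1*x+c0)) =
      H * (α * (G (2*(i+1)) - G (2*i)) + β * ((g (2*i) + g (2*(i+1)))/2) + γ * g (2*i+1)) := by
    intro i
    have e : nd (i+1) = nd i + 2*H := by rw [hnd]; push_cast; ring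
    rw [e, filon_panel k H (nd i) c0 c1 c2 hk' hH', hnd, hg, hGdef, hα, hβ, hγ]
    have a2 : a + 2*(i:ℝ)*H + 2*H = a + ((2*(i+1) : ℕ):ℝ)*H := by push_cast; ring
    have a1 : a + 2*(i:ℝ)*H + H = a + ((2*i+1 : ℕ):ℝ)*H := by push_cast; ring
    have a0 : a + 2*(i:ℝ)*H = a + ((2*i : ℕ):ℝ)*H := by push_cast; ring
    beta_reduce
    rw [a2, a1, a0]
  rw [Finset.sum_congr rfl (fun i _ => hpanel i)]
  have hLsum : (∑ i ∈ Finset.range n,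
        H * (α * (G (2*(i+1)) - G (2*i)) + β * ((g (2*i) + g (2*(i+1)))/2) + γ * g (2*i+1)))
      = H*α*(∑ i ∈ Finset.range n, (G (2*(i+1)) - G (2*i)))
        + (H*β/2)*(∑ i ∈ Finset.range n, g (2*i))
        + (H*β/2)*(∑ i ∈ Finset.range n, g (2*(i+1)))
        + H*γ*(∑ i ∈ Finset.range n, g (2*i+1)) := by
    rw [Finset.mul_sum, Finset.mul_sum, Finset.mul_sum, Finset.mul_sum,
      ← Finset.sum_add_distrib, ← Finset.sum_add_distrib, ← Finset.sum_add_distrib]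
    exact Finset.sum_congr rfl (fun i _ => by ring)
  rw [hLsum]
  have t1 : (∑ i ∈ Finset.range n, (G (2*(i+1)) - G (2*i))) = G (2*n) - G 0 :=
    Finset.sum_range_sub (fun i => G (2*i)) n
  have t2 : (∑ i ∈ Finset.range n, g (2*(i+1))) = (∑ r ∈ Finset.range (n+1), g (2*r)) - g 0 := by
    rw [Finset.sum_range_succ' (fun r => g (2*r)) n]
    norm_num
  have t3 : (∑ i ∈ Finset.range n, g (2*i)) = (∑ r ∈ Finset.range (n+1), g (2*r)) - g (2*n) := by
    rw [Finset.sum_range_succ]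
    ring
  rw [t1, t2, t3]
  simp only [filonCos]
  have hga : g 0 = (c2*a^2+c1*a+c0) * Real.cos (k*a) := by simp only [hg]; norm_num
  have hgb : g (2*n) = (c2*b^2+c1*b+c0) * Real.cos (k*b) := by simp only [hg]; rw [hb]
  have hGa : G 0 = (c2*a^2+c1*a+c0) * Real.sin (k*a) := by simp only [hGdef]; norm_num
  have hGb : G (2*n) = (c2*b^2+c1*b+c0) * Real.sin (k*b) := by simp only [hGdef]; rw [hb]
  have hsum1 : (∑ r ∈ Finset.range (n+1),
      (c2*(a+((2*r : ℕ):ℝ)*H)^2+c1*(a+((2*r : ℕ):ℝ)*H)+c0) * Real.cos (k*(a+((2*r : ℕ):ℝ)*H)))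
      = ∑ r ∈ Finset.range (n+1), g (2*r) :=
    Finset.sum_congr rfl (fun r _ => by simp only [hg])
  have hsum2 : (∑ r ∈ Finset.range n,
      (c2*(a+((2*r+1 : ℕ):ℝ)*H)^2+c1*(a+((2*r+1 : ℕ):ℝ)*H)+c0) * Real.cos (k*(a+((2*r+1 : ℕ):ℝ)*H)))
      = ∑ r ∈ Finset.range n, g (2*r+1) :=
    Finset.sum_congr rfl (fun r _ => by simp only [hg])
  rw [hsum1, hsum2, hga, hgb, hGa, hGb]
  ring
end

section
/- Let ω > 0, let g : ℝ → ℝ be continuous, let x : ℝ → ℝ be twice continuously differentiable with x''(t) = −ω²·x(t) + g(t) for all t, let h > 0 with grid points tₙ = n·h, and fix n ≥ 1 with T = n·h. For 0 ≤ j ≤ n−1 set I^S_j = ∫_{t_{n−j−1}}^{t_{n−j}} sin((t_{n−j}−s)ω)·g(s) ds and I^C_j = ∫_{t_{n−j−1}}^{t_{n−j}} cos((t_{n−j}−s)ω)·g(s) ds, and let Q^S_j, Q^C_j be real numbers (quadrature approximations) satisfying |Q^S_j − I^S_j| ≤ δ_j·h and |Q^C_j − I^C_j| ≤ δ_j·h,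 with δ = max_{0≤j≤n−1} δ_j. Define the numerical position Xₙ = cos(nhω)·x(0) + ω⁻¹·sin(nhω)·x'(0) + ω⁻¹·Σ_{j=0}^{n−1} [ cos(jhω)·Q^S_j + sin(jhω)·Q^C_j ]. Then |Xₙ − x(tₙ)| ≤ 2·ω⁻¹·δ·T. -/
open Real intervalIntegral Finset

lemma voc_aux (ω : ℝ) (hω : 0 < ω) (g : ℝ → ℝ) (hg : Continuous g)
    (x : ℝ → ℝ) (hx : ContDiff ℝ 2 x)
    (hode : ∀ t : ℝ, deriv (deriv x) t = -ω ^ 2 * x t + g t) (T : ℝ) :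
    x T = Real.cos (T * ω) * x 0 + ω⁻¹ * Real.sin (T * ω) * deriv x 0
      + ω⁻¹ * ∫ s in (0:ℝ)..T, Real.sin ((T - s) * ω) * g s := by
  have hω' : ω ≠ 0 := ne_of_gt hω
  have hx1 : Differentiable ℝ x := hx.differentiable (by norm_num)
  have hx2 : Differentiable ℝ (deriv x) := by
    have h2 : ContDiff ℝ (1 + 1) x := by norm_num; exact hx
    exact ((contDiff_succ_iff_deriv.mp h2).2.2).differentiable one_ne_zero
  have hF : ∀ s : ℝ, HasDerivAt (fun s => Real.sin ((T - s) * ω) * deriv x s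
      + ω * (Real.cos ((T - s) * ω) * x s)) (Real.sin ((T - s) * ω) * g s) s := by
    intro s
    have h1 : HasDerivAt (fun s : ℝ => (T - s) * ω) (-1 * ω) s :=
      ((hasDerivAt_id s).const_sub T).mul_const ω
    have hsin := (Real.hasDerivAt_sin ((T - s) * ω)).comp s h1
    have hcos := (Real.hasDerivAt_cos ((T - s) * ω)).comp s h1
    have hA := hsin.mul (hx2 s).hasDerivAt
    have hB := (hcos.mul (hx1 s).hasDerivAt).const_mul ω
    have hAB := hA.add hB
    refine hAB.congr_deriv ?_
    simp only [Function.comp_apply]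
    rw [hode]
    ring
  have hcont : Continuous (fun s => Real.sin ((T - s) * ω) * g s) := by fun_prop
  have hint := intervalIntegral.integral_eq_sub_of_hasDerivAt
    (f := fun s => Real.sin ((T - s) * ω) * deriv x s + ω * (Real.cos ((T - s) * ω) * x s))
    (a := 0) (b := T) (fun s _ => hF s) (hcont.intervalIntegrable 0 T)
  simp only [sub_self, zero_mul, Real.sin_zero, Real.cos_zero, sub_zero, one_mul] at hint
  have h2 : ω * x T = Real.sin (T * ω) * deriv x 0 + ω * (Real.cos (T * ω) * x 0)
      + ∫ s in (0:ℝ)..T, Real.sin ((T - s) * ω) * g s := by linarith [hint]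
  have h3 : x T = ω⁻¹ * (ω * x T) := by field_simp
  rw [h3, h2]
  field_simp
  ring

theorem trig_scheme_position_error_bound
    (ω : ℝ) (hω : 0 < ω) (g : ℝ → ℝ) (hg : Continuous g)
    (x : ℝ → ℝ) (hx : ContDiff ℝ 2 x)
    (hode : ∀ t : ℝ, deriv (deriv x) t = -ω ^ 2 * x t + g t)
    (h : ℝ) (hh : 0 < h) (t : ℕ → ℝ) (ht : ∀ m : ℕ, t m = m * h)
    (n : ℕ) (hn : 1 ≤ n) (T : ℝ) (hT : T = n * h)
    (QS QC δj : ℕ → ℝ)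
    (hQS : ∀ j : ℕ, j < n →
      |QS j - ∫ s in (t (n - j - 1))..(t (n - j)), Real.sin ((t (n - j) - s) * ω) * g s|
        ≤ δj j * h)
    (hQC : ∀ j : ℕ, j < n →
      |QC j - ∫ s in (t (n - j - 1))..(t (n - j)), Real.cos ((t (n - j) - s) * ω) * g s|
        ≤ δj j * h)
    (δ : ℝ)
    (hδ : δ = (Finset.range n).sup'
      (Finset.nonempty_range_iff.mpr (Nat.one_le_iff_ne_zero.mp hn)) δj)
    (X : ℝ)
    (hX : X = Real.cos (n * h * ω) * x 0 + ω⁻¹ * Real.sin (n * h * ω) * deriv x 0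
      + ω⁻¹ * ∑ j ∈ Finset.range n,
          (Real.cos (j * h * ω) * QS j + Real.sin (j * h * ω) * QC j)) :
    |X - x (t n)| ≤ 2 * ω⁻¹ * δ * T := by
  subst hT hX
  have hω' : ω ≠ 0 := ne_of_gt hω
  set IS : ℕ → ℝ := fun j => ∫ s in (t (n - j - 1))..(t (n - j)),
      Real.sin ((t (n - j) - s) * ω) * g s with hIS
  set IC : ℕ → ℝ := fun j => ∫ s in (t (n - j - 1))..(t (n - j)),
      Real.cos ((t (n - j) - s) * ω) * g s with hIC
  set T := (n : ℝ) * h with hT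
  -- per-term identity
  have hterm : ∀ j ∈ Finset.range n,
      Real.cos (j * h * ω) * IS j + Real.sin (j * h * ω) * IC j
        = ∫ s in (t (n - j - 1))..(t (n - j)), Real.sin ((T - s) * ω) * g s := by
    intro j hj
    rw [Finset.mem_range] at hj
    have hc : ((n - j : ℕ) : ℝ) = (n : ℝ) - j := by
      push_cast [Nat.cast_sub hj.le]; ring
    have i1 : IntervalIntegrable (fun s => Real.sin ((t (n - j) - s) * ω) * g s)
        MeasureTheory.volume (t (n - j - 1)) (t (n - j)) :=
      Continuous.intervalIntegrable (by fun_prop) _ _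
    have i2 : IntervalIntegrable (fun s => Real.cos ((t (n - j) - s) * ω) * g s)
        MeasureTheory.volume (t (n - j - 1)) (t (n - j)) :=
      Continuous.intervalIntegrable (by fun_prop) _ _
    simp only [hIS, hIC]
    rw [← intervalIntegral.integral_const_mul, ← intervalIntegral.integral_const_mul,
      ← intervalIntegral.integral_add (i1.const_mul _) (i2.const_mul _)]
    apply intervalIntegral.integral_congr
    intro s _
    simp only
    have harg : (T - s) * ω = (j * h * ω) + ((t (n - j) - s) * ω) := by
      rw [hT, ht, hc]; ring
    rw [harg, Real.sin_add]
    ring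
  -- sum over adjacent intervals
  have hadj : ∑ j ∈ Finset.range n,
      (∫ s in (t (n - j - 1))..(t (n - j)), Real.sin ((T - s) * ω) * g s)
      = ∫ s in (0:ℝ)..T, Real.sin ((T - s) * ω) * g s := by
    have hii : ∀ k : ℕ, k < n → IntervalIntegrable (fun s => Real.sin ((T - s) * ω) * g s)
        MeasureTheory.volume (t k) (t (k + 1)) :=
      fun k _ => Continuous.intervalIntegrable (by fun_prop) _ _
    calc ∑ j ∈ Finset.range n,
          (∫ s in (t (n - j - 1))..(t (n - j)), Real.sin ((T - s) * ω) * g s)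
        = ∑ j ∈ Finset.range n,
          (∫ s in (t (n - 1 - j))..(t ((n - 1 - j) + 1)), Real.sin ((T - s) * ω) * g s) := by
          apply Finset.sum_congr rfl
          intro j hj
          rw [Finset.mem_range] at hj
          have e1 : n - j - 1 = n - 1 - j := by omega
          have e2 : n - j = (n - 1 - j) + 1 := by omega
          rw [e1, e2]
      _ = ∑ j ∈ Finset.range n,
          (∫ s in (t j)..(t (j + 1)), Real.sin ((T - s) * ω) * g s) :=
          Finset.sum_range_reflect
            (fun j => ∫ s in (t j)..(t (j + 1)), Real.sin ((T - s) * ω) * g s) n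
      _ = ∫ s in (t 0)..(t n), Real.sin ((T - s) * ω) * g s :=
          intervalIntegral.sum_integral_adjacent_intervals hii
      _ = ∫ s in (0:ℝ)..T, Real.sin ((T - s) * ω) * g s := by
          rw [ht 0, ht n]; norm_num; rfl
  -- exact solution value
  have hxT := voc_aux ω hω g hg x hx hode T
  have hxn : x (t n) = x T := by rw [ht n]
  -- difference formula
  have hdiff : (Real.cos (n * h * ω) * x 0 + ω⁻¹ * Real.sin (n * h * ω) * deriv x 0
      + ω⁻¹ * ∑ j ∈ Finset.range n,
          (Real.cos (j * h * ω) * QS j + Real.sin (j * h * ω) * QC j)) - x (t n)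
      = ω⁻¹ * ∑ j ∈ Finset.range n,
          (Real.cos (j * h * ω) * (QS j - IS j) + Real.sin (j * h * ω) * (QC j - IC j)) := by
    rw [hxn, hxT, ← hadj, ← Finset.sum_congr rfl hterm, ← hT]
    rw [show ∑ j ∈ Finset.range n,
        (Real.cos (j * h * ω) * (QS j - IS j) + Real.sin (j * h * ω) * (QC j - IC j))
        = ∑ j ∈ Finset.range n,
            (Real.cos (j * h * ω) * QS j + Real.sin (j * h * ω) * QC j)
          - ∑ j ∈ Finset.range n,
            (Real.cos (j * h * ω) * IS j + Real.sin (j * h * ω) * IC j) from by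
      rw [← Finset.sum_sub_distrib]; apply Finset.sum_congr rfl; intros; ring]
    ring
  rw [hdiff, abs_mul, abs_of_nonneg (inv_nonneg.mpr hω.le)]
  -- termwise bound
  have hbound : ∀ j ∈ Finset.range n,
      |Real.cos (j * h * ω) * (QS j - IS j) + Real.sin (j * h * ω) * (QC j - IC j)|
        ≤ 2 * (δ * h) := by
    intro j hj
    have hjn : j < n := Finset.mem_range.mp hj
    have hδjδ : δj j ≤ δ := hδ ▸ Finset.le_sup' δj hj
    have h1 : |QS j - IS j| ≤ δj j * h := hQS j hjn
    have h2 : |QC j - IC j| ≤ δj j * h := hQC j hjn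
    have h3 : δj j * h ≤ δ * h := mul_le_mul_of_nonneg_right hδjδ hh.le
    calc |Real.cos (j * h * ω) * (QS j - IS j) + Real.sin (j * h * ω) * (QC j - IC j)|
        ≤ |Real.cos (j * h * ω) * (QS j - IS j)| + |Real.sin (j * h * ω) * (QC j - IC j)| :=
          abs_add_le _ _
      _ ≤ |QS j - IS j| + |QC j - IC j| := by
          rw [abs_mul, abs_mul]
          exact add_le_add
            (mul_le_of_le_one_left (abs_nonneg _) (Real.abs_cos_le_one _))
            (mul_le_of_le_one_left (abs_nonneg _) (Real.abs_sin_le_one _))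
      _ ≤ δ * h + δ * h := add_le_add (h1.trans h3) (h2.trans h3)
      _ = 2 * (δ * h) := by ring
  have habs : |∑ j ∈ Finset.range n,
      (Real.cos (j * h * ω) * (QS j - IS j) + Real.sin (j * h * ω) * (QC j - IC j))|
      ≤ n * (2 * (δ * h)) := by
    calc |∑ j ∈ Finset.range n,
        (Real.cos (j * h * ω) * (QS j - IS j) + Real.sin (j * h * ω) * (QC j - IC j))|
        ≤ ∑ j ∈ Finset.range n,
          |Real.cos (j * h * ω) * (QS j - IS j) + Real.sin (j * h * ω) * (QC j - IC j)| :=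
          Finset.abs_sum_le_sum_abs _ _
      _ ≤ ∑ _j ∈ Finset.range n, (2 * (δ * h)) := Finset.sum_le_sum hbound
      _ = n * (2 * (δ * h)) := by
          rw [Finset.sum_const, Finset.card_range, nsmul_eq_mul]
  calc ω⁻¹ * |∑ j ∈ Finset.range n,
      (Real.cos (j * h * ω) * (QS j - IS j) + Real.sin (j * h * ω) * (QC j - IC j))|
      ≤ ω⁻¹ * (n * (2 * (δ * h))) :=
        mul_le_mul_of_nonneg_left habs (inv_nonneg.mpr hω.le)
    _ = 2 * ω⁻¹ * δ * T := by rw [hT]; ring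
end

section
/- Let ω > 0, let g : ℝ → ℝ be continuous, let x : ℝ → ℝ be twice continuously differentiable with x''(t) = −ω²·x(t) + g(t) for all t, let h > 0 with grid points tₙ = n·h, and fix n ≥ 1 with T = n·h. For 0 ≤ j ≤ n−1 set I^S_j = ∫_{t_{n−j−1}}^{t_{n−j}} sin((t_{n−j}−s)ω)·g(s) ds and I^C_j = ∫_{t_{n−j−1}}^{t_{n−j}} cos((t_{n−j}−s)ω)·g(s) ds, and let Q^S_j, Q^C_j be real numbers (quadrature approximations) satisfying |Q^S_j − I^S_j| ≤ δ_j·h and |Q^C_j − I^C_j| ≤ δ_j·h, with δ = max_{0≤j≤n−1} δ_j. Define the numerical velocity Vₙ = −ω·sin(nhω)·x(0) + cos(nhω)·x'(0) + Σ_{j=0}^{n−1} [ −sin(jhω)·Q^S_j + cos(jhω)·Q^C_j ]. Then |Vₙ − x'(tₙ)| ≤ 2·δ·T. -/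
open Real intervalIntegral Finset

theorem trig_scheme_velocity_error_bound
    (ω : ℝ) (hω : 0 < ω) (g : ℝ → ℝ) (hg : Continuous g)
    (x : ℝ → ℝ) (hx : ContDiff ℝ 2 x)
    (hode : ∀ t : ℝ, deriv (deriv x) t = -ω ^ 2 * x t + g t)
    (h : ℝ) (hh : 0 < h) (t : ℕ → ℝ) (ht : ∀ m : ℕ, t m = m * h)
    (n : ℕ) (hn : 1 ≤ n) (T : ℝ) (hT : T = n * h)
    (QS QC δj : ℕ → ℝ)
    (hQS : ∀ j : ℕ, j < n →
      |QS j - ∫ s in (t (n - j - 1))..(t (n - j)), Real.sin ((t (n - j) - s) * ω) * g s|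
        ≤ δj j * h)
    (hQC : ∀ j : ℕ, j < n →
      |QC j - ∫ s in (t (n - j - 1))..(t (n - j)), Real.cos ((t (n - j) - s) * ω) * g s|
        ≤ δj j * h)
    (δ : ℝ)
    (hδ : δ = (Finset.range n).sup'
      (Finset.nonempty_range_iff.mpr (Nat.one_le_iff_ne_zero.mp hn)) δj)
    (V : ℝ)
    (hV : V = -ω * Real.sin (n * h * ω) * x 0 + Real.cos (n * h * ω) * deriv x 0
      + ∑ j ∈ Finset.range n,
          (-Real.sin (j * h * ω) * QS j + Real.cos (j * h * ω) * QC j)) :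
    |V - deriv x (t n)| ≤ 2 * δ * T := by
  have hxd : Differentiable ℝ x := hx.differentiable (by norm_num)
  have hxd2 : Differentiable ℝ (deriv x) := by
    have h2 : ContDiff ℝ (1 + 1) x := by norm_num; exact hx
    exact ((contDiff_succ_iff_deriv.mp h2).2.2).differentiable (by norm_num)
  set A : ℝ := (n : ℝ) * h with hAdef
  -- variation of constants for the velocity
  have key : (∫ s in (0:ℝ)..A, Real.cos ((A - s) * ω) * g s)
      = deriv x A - (-ω * Real.sin (A * ω) * x 0 + Real.cos (A * ω) * deriv x 0) := by
    have hd : ∀ s ∈ Set.uIcc (0:ℝ) A,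
        HasDerivAt (fun s => Real.cos ((A - s) * ω) * deriv x s
          - ω * Real.sin ((A - s) * ω) * x s) (Real.cos ((A - s) * ω) * g s) s := by
      intro s _
      have hu : HasDerivAt (fun s : ℝ => (A - s) * ω) (-1 * ω) s :=
        ((hasDerivAt_id s).const_sub A).mul_const ω
      have hc : HasDerivAt (fun s : ℝ => Real.cos ((A - s) * ω))
          (-Real.sin ((A - s) * ω) * (-1 * ω)) s := hu.cos
      have hsn : HasDerivAt (fun s : ℝ => Real.sin ((A - s) * ω))
          (Real.cos ((A - s) * ω) * (-1 * ω)) s := hu.sin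
      have hx' : HasDerivAt x (deriv x s) s := (hxd s).hasDerivAt
      have hx'' : HasDerivAt (deriv x) (deriv (deriv x) s) s := (hxd2 s).hasDerivAt
      have hm := (hc.mul hx'').sub ((hsn.const_mul ω).mul hx')
      convert hm using 1
      case e'_4 => rfl
      case e'_5 => rfl
      case e'_8 => rfl
      rw [hode s]; ring
    have hint : IntervalIntegrable (fun s => Real.cos ((A - s) * ω) * g s)
        MeasureTheory.volume 0 A :=
      ((Real.continuous_cos.comp (((continuous_const.sub continuous_id).mul
        continuous_const))).mul hg).intervalIntegrable 0 A
    rw [intervalIntegral.integral_eq_sub_of_hasDerivAt hd hint]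
    simp
    ring
  -- splitting the integral over subintervals
  have hcont : Continuous fun s => Real.cos ((A - s) * ω) * g s :=
    (Real.continuous_cos.comp ((continuous_const.sub continuous_id).mul
      continuous_const)).mul hg
  have hsplit : ∑ k ∈ Finset.range n,
      (∫ s in (t k)..(t (k+1)), Real.cos ((A - s) * ω) * g s)
      = ∫ s in (t 0)..(t n), Real.cos ((A - s) * ω) * g s :=
    intervalIntegral.sum_integral_adjacent_intervals
      (fun k _ => hcont.intervalIntegrable _ _)
  -- each subinterval integral as combination of IS, IC
  have hinterval : ∀ j : ℕ, j < n →
      (∫ s in (t (n - j - 1))..(t (n - j)), Real.cos ((A - s) * ω) * g s)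
      = Real.cos (j * h * ω) *
          (∫ s in (t (n - j - 1))..(t (n - j)), Real.cos ((t (n - j) - s) * ω) * g s)
        - Real.sin (j * h * ω) *
          (∫ s in (t (n - j - 1))..(t (n - j)), Real.sin ((t (n - j) - s) * ω) * g s) := by
    intro j hj
    have hcast : ((n - j : ℕ) : ℝ) = (n : ℝ) - j := Nat.cast_sub hj.le
    have i1 : IntervalIntegrable
        (fun s => Real.cos (j * h * ω) * (Real.cos ((t (n - j) - s) * ω) * g s))
        MeasureTheory.volume (t (n - j - 1)) (t (n - j)) :=
      (continuous_const.mul ((Real.continuous_cos.comp ((continuous_const.sub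
        continuous_id).mul continuous_const)).mul hg)).intervalIntegrable _ _
    have i2 : IntervalIntegrable
        (fun s => Real.sin (j * h * ω) * (Real.sin ((t (n - j) - s) * ω) * g s))
        MeasureTheory.volume (t (n - j - 1)) (t (n - j)) :=
      (continuous_const.mul ((Real.continuous_sin.comp ((continuous_const.sub
        continuous_id).mul continuous_const)).mul hg)).intervalIntegrable _ _
    rw [← intervalIntegral.integral_const_mul, ← intervalIntegral.integral_const_mul,
      ← intervalIntegral.integral_sub i1 i2]
    apply intervalIntegral.integral_congr
    intro s _
    have he : (A - s) * ω = j * h * ω + (t (n - j) - s) * ω := by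
      rw [ht (n - j), hcast, hAdef]; ring
    simp only
    rw [he, Real.cos_add]
    ring
  -- the full integral as a sum
  have hsum : (∫ s in (0:ℝ)..A, Real.cos ((A - s) * ω) * g s)
      = ∑ j ∈ Finset.range n,
          (Real.cos (j * h * ω) *
            (∫ s in (t (n - j - 1))..(t (n - j)), Real.cos ((t (n - j) - s) * ω) * g s)
          - Real.sin (j * h * ω) *
            (∫ s in (t (n - j - 1))..(t (n - j)), Real.sin ((t (n - j) - s) * ω) * g s)) := by
    have h0 : t 0 = 0 := by rw [ht]; simp
    have hnn : t n = A := by rw [ht]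
    calc (∫ s in (0:ℝ)..A, Real.cos ((A - s) * ω) * g s)
        = ∫ s in (t 0)..(t n), Real.cos ((A - s) * ω) * g s := by rw [h0, hnn]
      _ = ∑ k ∈ Finset.range n,
            (∫ s in (t k)..(t (k+1)), Real.cos ((A - s) * ω) * g s) := hsplit.symm
      _ = ∑ j ∈ Finset.range n,
            (∫ s in (t (n-1-j))..(t (n-1-j+1)), Real.cos ((A - s) * ω) * g s) :=
          (Finset.sum_range_reflect (fun k => ∫ s in (t k)..(t (k+1)),
            Real.cos ((A - s) * ω) * g s) n).symm
      _ = ∑ j ∈ Finset.range n,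
          (Real.cos (j * h * ω) *
            (∫ s in (t (n - j - 1))..(t (n - j)), Real.cos ((t (n - j) - s) * ω) * g s)
          - Real.sin (j * h * ω) *
            (∫ s in (t (n - j - 1))..(t (n - j)), Real.sin ((t (n - j) - s) * ω) * g s)) := by
          apply Finset.sum_congr rfl
          intro j hj
          have hj' := Finset.mem_range.mp hj
          have e1 : n - 1 - j = n - j - 1 := by omega
          have e2 : n - 1 - j + 1 = n - j := by omega
          rw [e2, e1]
          exact hinterval j hj'
  -- main identity for the error
  have hmain : V - deriv x (t n) = ∑ j ∈ Finset.range n,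
      (-Real.sin (j * h * ω) *
        (QS j - ∫ s in (t (n - j - 1))..(t (n - j)), Real.sin ((t (n - j) - s) * ω) * g s)
      + Real.cos (j * h * ω) *
        (QC j - ∫ s in (t (n - j - 1))..(t (n - j)), Real.cos ((t (n - j) - s) * ω) * g s)) := by
    have hd : deriv x A = (-ω * Real.sin (A * ω) * x 0 + Real.cos (A * ω) * deriv x 0)
        + ∑ j ∈ Finset.range n,
          (Real.cos (j * h * ω) *
            (∫ s in (t (n - j - 1))..(t (n - j)), Real.cos ((t (n - j) - s) * ω) * g s)
          - Real.sin (j * h * ω) *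
            (∫ s in (t (n - j - 1))..(t (n - j)), Real.sin ((t (n - j) - s) * ω) * g s)) := by
      rw [← hsum, key]; ring
    have hnn : t n = A := by rw [ht]
    rw [hnn, hV, hd]
    rw [add_sub_add_left_eq_sub, ← Finset.sum_sub_distrib]
    apply Finset.sum_congr rfl
    intro j _
    ring
  -- bound the error
  have hδh : ∀ j : ℕ, j < n → δj j * h ≤ δ * h := fun j hj =>
    mul_le_mul_of_nonneg_right (hδ ▸ Finset.le_sup' δj (Finset.mem_range.mpr hj)) hh.le
  rw [hmain]
  calc |∑ j ∈ Finset.range n,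
      (-Real.sin (j * h * ω) *
        (QS j - ∫ s in (t (n - j - 1))..(t (n - j)), Real.sin ((t (n - j) - s) * ω) * g s)
      + Real.cos (j * h * ω) *
        (QC j - ∫ s in (t (n - j - 1))..(t (n - j)), Real.cos ((t (n - j) - s) * ω) * g s))|
      ≤ ∑ j ∈ Finset.range n,
        |(-Real.sin (j * h * ω) *
          (QS j - ∫ s in (t (n - j - 1))..(t (n - j)), Real.sin ((t (n - j) - s) * ω) * g s)
        + Real.cos (j * h * ω) *
          (QC j - ∫ s in (t (n - j - 1))..(t (n - j)), Real.cos ((t (n - j) - s) * ω) * g s))| :=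
      Finset.abs_sum_le_sum_abs _ _
    _ ≤ ∑ j ∈ Finset.range n, (2 * δ * h) := by
      apply Finset.sum_le_sum
      intro j hj
      have hj' := Finset.mem_range.mp hj
      have h1 : |QS j - ∫ s in (t (n - j - 1))..(t (n - j)),
          Real.sin ((t (n - j) - s) * ω) * g s| ≤ δ * h :=
        le_trans (hQS j hj') (hδh j hj')
      have h2 : |QC j - ∫ s in (t (n - j - 1))..(t (n - j)),
          Real.cos ((t (n - j) - s) * ω) * g s| ≤ δ * h :=
        le_trans (hQC j hj') (hδh j hj')
      set u : ℝ := QS j - ∫ s in (t (n - j - 1))..(t (n - j)),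
        Real.sin ((t (n - j) - s) * ω) * g s with hu
      set v : ℝ := QC j - ∫ s in (t (n - j - 1))..(t (n - j)),
        Real.cos ((t (n - j) - s) * ω) * g s with hv
      calc |(-Real.sin (j * h * ω) * u + Real.cos (j * h * ω) * v)|
          ≤ |(-Real.sin (j * h * ω)) * u| + |Real.cos (j * h * ω) * v| := abs_add_le _ _
        _ = |Real.sin (j * h * ω)| * |u| + |Real.cos (j * h * ω)| * |v| := by
            rw [abs_mul, abs_mul, abs_neg]
        _ ≤ 1 * (δ * h) + 1 * (δ * h) :=
            add_le_add
              (mul_le_mul (Real.abs_sin_le_one _) h1 (abs_nonneg _) zero_le_one)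
              (mul_le_mul (Real.abs_cos_le_one _) h2 (abs_nonneg _) zero_le_one)
        _ = 2 * δ * h := by ring
    _ = n * (2 * δ * h) := by
      rw [Finset.sum_const, Finset.card_range, nsmul_eq_mul]
    _ = 2 * δ * T := by rw [hT]; ring
end
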